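/- Let B be a negative definite symmetric integer matrix indexed by a finite set J, with B_{ij} ≥ 0 for i ≠ j, and suppose the associated graph is connected (i.e., B is irreducible). Then all entries of B^{-1} are strictly negative. -/

import Mathlib

open Matrix

variable {J : Type*}

/-- The rational bilinear (intersection) form associated with the integral matrix `B`. -/
def bform [Fintype J] (B : Matrix J J ℤ) (x y : J → ℚ) : ℚ :=
  x ⬝ᵥ (B.map (fun n => (n : ℚ))).mulVec y

/-- `B` is negative definite as a rational quadratic form. -/
def NegDef [Fintype J] (B : Matrix J J ℤ) : Prop :=
  ∀ x : J → ℚ, x ≠ 0 → bform B x x < 0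

/-- Membership in the lattice `L` (integral coordinates in the basis `E_j`). -/
def isLat (x : J → ℚ) : Prop := ∀ j, ∃ m : ℤ, x j = (m : ℚ)

/-- Membership in the dual lattice `L' ⊂ L ⊗ ℚ`. -/
def isDual [Fintype J] [DecidableEq J] (B : Matrix J J ℤ) (x : J → ℚ) : Prop :=
  ∀ j, ∃ m : ℤ, bform B x (Pi.single j 1) = (m : ℚ)

/-- Membership in the anti-nef cone `NE_ℚ = {x : (x,E_j) ≥ 0 ∀ j}`. -/
def inNE [Fintype J] [DecidableEq J] (B : Matrix J J ℤ) (x : J → ℚ) : Prop :=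
  ∀ j, 0 ≤ bform B x (Pi.single j 1)

/-- Effective rational cycles: all coordinates nonnegative. -/
def Effective (x : J → ℚ) : Prop := ∀ j, 0 ≤ x j

/-- `χ(x) = -(x, x+K)/2` (Riemann–Roch). -/
def chi [Fintype J] (B : Matrix J J ℤ) (K x : J → ℚ) : ℚ := -(bform B x (x + K)) / 2

section AuxLemmas

variable [Fintype J] [DecidableEq J]

lemma aux_nonneg (A : Matrix J J ℚ)
    (hpos : ∀ x : J → ℚ, x ≠ 0 → 0 < x ⬝ᵥ A.mulVec x)
    (hoffA : ∀ i j, i ≠ j → A i j ≤ 0)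
    (x : J → ℚ) (hx : ∀ i, 0 ≤ A.mulVec x i) (i : J) : 0 ≤ x i := by
  by_contra hxi
  push_neg at hxi
  set v : J → ℚ := fun k => max (-x k) 0 with hv
  set u : J → ℚ := fun k => max (x k) 0 with hu
  have hvnn : ∀ k, 0 ≤ v k := fun k => le_max_right _ _
  have hunn : ∀ k, 0 ≤ u k := fun k => le_max_right _ _
  have hxuv : u - x = v := by
    funext k
    rcases le_total (x k) 0 with h | h
    · simp [hu, hv, max_eq_right h, max_eq_left (neg_nonneg.mpr h)]
    · simp [hu, hv, max_eq_left h, max_eq_right (neg_nonpos.mpr h)]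
  have hvne : v ≠ 0 := by
    intro h0
    have : v i = 0 := by rw [h0]; rfl
    have : 0 < v i := by simp [hv]; linarith
    simp_all
  have hsplit : v ⬝ᵥ A.mulVec v = v ⬝ᵥ A.mulVec u - v ⬝ᵥ A.mulVec x := by
    rw [← dotProduct_sub, ← Matrix.mulVec_sub, hxuv]
  have t1 : v ⬝ᵥ A.mulVec u ≤ 0 := by
    apply Finset.sum_nonpos
    intro k _
    rcases eq_or_lt_of_le (hvnn k) with h | h
    · rw [← h, zero_mul]
    · have hxk : x k < 0 := by
        by_contra hc
        push_neg at hc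
        have : v k = 0 := by simp [hv, max_eq_right (neg_nonpos.mpr hc)]
        simp_all
      have hin : A.mulVec u k ≤ 0 := by
        apply Finset.sum_nonpos
        intro l _
        rcases eq_or_ne l k with rfl | hlk
        · have : u l = 0 := by simp [hu, max_eq_right (le_of_lt hxk)]
          simp [this]
        · exact mul_nonpos_of_nonpos_of_nonneg (hoffA k l (Ne.symm hlk)) (hunn l)
      exact mul_nonpos_of_nonneg_of_nonpos (le_of_lt h) hin
  have t2 : 0 ≤ v ⬝ᵥ A.mulVec x := by
    apply Finset.sum_nonneg
    intro k _
    exact mul_nonneg (hvnn k) (hx k)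
  have := hpos v hvne
  linarith

lemma aux_pos (A : Matrix J J ℚ)
    (hpos : ∀ x : J → ℚ, x ≠ 0 → 0 < x ⬝ᵥ A.mulVec x)
    (hoffA : ∀ i j, i ≠ j → A i j ≤ 0)
    (G : SimpleGraph J) (hG : G.Connected)
    (hadj : ∀ a b, G.Adj a b → A a b ≠ 0)
    (j : J) (x : J → ℚ) (hxe : A.mulVec x = Pi.single j 1)
    (i : J) : 0 < x i := by
  have hxnn : ∀ k, 0 ≤ x k := by
    apply aux_nonneg A hpos hoffA
    intro k
    rw [hxe, Pi.single_apply]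
    split <;> norm_num
  have key : ∀ a, x a = 0 → a ≠ j ∧ ∀ k, A a k * x k = 0 := by
    intro a ha
    have hsum : A.mulVec x a = ∑ k, A a k * x k := rfl
    have hterms : ∀ k ∈ Finset.univ, A a k * x k ≤ 0 := by
      intro k _
      rcases eq_or_ne k a with rfl | hk
      · simp [ha]
      · exact mul_nonpos_of_nonpos_of_nonneg (hoffA a k (Ne.symm hk)) (hxnn k)
    have hle : A.mulVec x a ≤ 0 := by
      rw [hsum]; exact Finset.sum_nonpos fun k _ => hterms k (Finset.mem_univ k)
    have haj : a ≠ j := by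
      rintro rfl
      rw [hxe] at hle
      simp at hle
      norm_num at hle
    have h0 : ∑ k, A a k * x k = 0 := by
      rw [← hsum, hxe, Pi.single_apply, if_neg haj]
    have := (Finset.sum_eq_zero_iff_of_nonpos hterms).mp h0
    exact ⟨haj, fun k => this k (Finset.mem_univ k)⟩
  by_contra hxi
  have hxi0 : x i = 0 := le_antisymm (not_lt.mp hxi) (hxnn i)
  have step : ∀ a b, G.Adj a b → x a = 0 → x b = 0 := by
    intro a b hab h
    have h2 := (key _ h).2 b
    rcases mul_eq_zero.mp h2 with h3 | h3
    · exact absurd h3 (hadj _ _ hab)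
    · exact h3
  have walkzero : ∀ (a b : J) (p : G.Walk a b), x a = 0 → x b = 0 := by
    intro a b p
    induction p with
    | nil => exact id
    | @cons a c _ hab q ih => intro h; exact ih (step _ _ hab h)
  obtain ⟨p⟩ := hG i j
  exact (key j (walkzero i j p hxi0)).1 rfl

end AuxLemmas

/-- all entries of the inverse of a negative definite symmetric
integer matrix with nonnegative off-diagonal entries and connected graph
are strictly negative. -/
theorem stmt0 {J : Type*} [Fintype J] [DecidableEq J] [Nonempty J]
    (B : Matrix J J ℤ)
    (hsym : B.IsSymm)
    (hneg : NegDef B)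
    (hoff : ∀ i j, i ≠ j → 0 ≤ B i j)
    (hconn : (SimpleGraph.fromRel (fun i j => B i j ≠ 0)).Connected) :
    ∀ i j, (B.map (fun n => (n : ℚ)))⁻¹ i j < 0 := by
  intro i j
  set Mq : Matrix J J ℚ := B.map (fun n => (n : ℚ)) with hMq
  set A : Matrix J J ℚ := -Mq with hA
  have hpos : ∀ x : J → ℚ, x ≠ 0 → 0 < x ⬝ᵥ A.mulVec x := by
    intro x hx
    have h1 := hneg x hx
    unfold bform at h1
    have h2 : x ⬝ᵥ A.mulVec x = -(x ⬝ᵥ Mq.mulVec x) := by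
      rw [hA, Matrix.neg_mulVec, dotProduct_neg]
    rw [h2]
    rw [← hMq] at h1
    linarith
  have hoffA : ∀ a b, a ≠ b → A a b ≤ 0 := by
    intro a b h
    have := hoff a b h
    simp only [hA, Matrix.neg_apply, hMq, Matrix.map_apply]
    have : (0 : ℚ) ≤ (B a b : ℚ) := by exact_mod_cast this
    linarith
  have hdet : IsUnit Mq.det := by
    rw [isUnit_iff_ne_zero]
    intro hd0
    obtain ⟨v, hvne, hv0⟩ := Matrix.exists_mulVec_eq_zero_iff.mpr hd0
    have := hneg v hvne
    unfold bform at this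
    rw [← hMq, hv0, dotProduct_zero] at this
    exact absurd this (by norm_num)
  have hcol : A.mulVec (fun k => -(Mq⁻¹ k j)) = Pi.single j 1 := by
    funext a
    have h1 : Mq * Mq⁻¹ = 1 := Matrix.mul_nonsing_inv Mq hdet
    have h2 : (Mq * Mq⁻¹) a j = (1 : Matrix J J ℚ) a j := by rw [h1]
    rw [Matrix.mul_apply, Matrix.one_apply] at h2
    have h4 : A.mulVec (fun k => -(Mq⁻¹ k j)) a = ∑ k, Mq a k * Mq⁻¹ k j := by
      simp [Matrix.mulVec, dotProduct, hA]
    rw [h4, h2, Pi.single_apply]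
  have hadj : ∀ a b, (SimpleGraph.fromRel (fun i j => B i j ≠ 0)).Adj a b → A a b ≠ 0 := by
    intro a b hab
    rw [SimpleGraph.fromRel_adj] at hab
    obtain ⟨hne, h | h⟩ := hab
    · simp only [hA, Matrix.neg_apply, hMq, Matrix.map_apply, ne_eq, neg_eq_zero]
      exact_mod_cast h
    · have hba : B a b = B b a := by
        conv_lhs => rw [← hsym]
        rfl
      simp only [hA, Matrix.neg_apply, hMq, Matrix.map_apply, ne_eq, neg_eq_zero]
      rw [hba]
      exact_mod_cast h
  have hfin := aux_pos A hpos hoffA _ hconn hadj j _ hcol i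
  change 0 < -(Mq⁻¹ i j) at hfin
  linarith
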